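/- Let G be a group partitioned by finitely many right cosets H_1α_1, …, H_sα_s with s ≥ 2. Then each subgroup H_i has finite index in G. -/
import Mathlib

open scoped Pointwise

/-- If a group `G` is partitioned by finitely many right cosets `H i * α i` (`s ≥ 2`),
then each subgroup `H i` has finite index in `G`. -/
theorem coset_partition_finite_index
    {G : Type*} [Group G] (s : ℕ) (hs : 2 ≤ s)
    (H : Fin s → Subgroup G) (α : Fin s → G)
    (hpart : ∀ g : G, ∃! i : Fin s, g * (α i)⁻¹ ∈ H i) :
    ∀ i : Fin s, (H i).FiniteIndex := by
  classical
  have hcovers : ⋃ k ∈ (Finset.univ : Finset (Fin s)), (α k)⁻¹ • (H k : Set G) = Set.univ := by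
    ext x
    simp only [Set.mem_iUnion, Set.mem_univ, iff_true, Finset.mem_univ, exists_true_left]
    obtain ⟨j, hj, -⟩ := hpart x⁻¹
    exact ⟨j, by
      rw [mem_leftCoset_iff]
      simpa using (H j).inv_mem hj⟩
  have hfil := Subgroup.leftCoset_cover_filter_FiniteIndex hcovers
  intro i
  by_contra hi
  have : ((α i)⁻¹ : G) ∈ (Set.univ : Set G) := Set.mem_univ _
  rw [← hfil] at this
  simp only [Set.mem_iUnion, Finset.mem_filter, Finset.mem_univ, true_and] at this
  obtain ⟨j, hjfi, hj⟩ := this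
  rw [mem_leftCoset_iff] at hj
  -- hj : α j * (α i)⁻¹ ∈ H j
  obtain ⟨k, hk, huniq⟩ := hpart (α i)
  have h1 : i = k := huniq i (by simpa using (H i).one_mem)
  have h2 : j = k := huniq j (by simpa using (H j).inv_mem hj)
  exact hi (h1 ▸ h2.symm ▸ hjfi)
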